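/- Let X(α^n), n ∈ ℤ, be a zero-mean Gaussian (or wide-sense Markov) DT-SIM process with scale α^T whose covariance factors as R_n^H(τ) = G(α^n) K(α^{n+τ}) for τ ≥ 0 with R_n^H(τ) ≠ 0. Then for k ≥ 0 and v ∈ {0,…,T−1}, R_n^H(kT+v) = [h̃(α^{T−1})]^k · h̃(α^{v+n−1}) · [h̃(α^{n−1})]^{−1} · R_n^H(0), where h̃(α^r) = ∏_{j=0}^{r} R_j^H(1)/R_j^H(0) and h̃(α^{−1}) = 1. -/

import Mathlib

/-- `htil R r` represents `h̃(α^r) = ∏_{j=0}^{r} R_j^H(1)/R_j^H(0)` for `r ≥ 0`,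
with `htil R (-1) = 1` (empty product). -/
noncomputable def htil (R : ℕ → ℕ → ℝ) (r : ℤ) : ℝ :=
  ∏ j ∈ Finset.range (r + 1).toNat, R j 1 / R j 0

theorem DTSIM_covariance_structure
    (H α : ℝ) (T : ℕ) (hH : 0 < H) (hα : 1 < α) (hT : 0 < T)
    (R : ℕ → ℕ → ℝ) (G K : ℝ → ℝ)
    (hfact : ∀ n τ : ℕ, R n τ = G (α ^ n) * K (α ^ (n + τ)))
    (hne : ∀ n τ : ℕ, R n τ ≠ 0)
    (hDSI : ∀ n τ : ℕ, R (n + T) τ = α ^ (2 * (T : ℝ) * H) * R n τ) :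
    ∀ k n v : ℕ, n < T → v < T →
      R n (k * T + v)
        = (htil R ((T : ℤ) - 1)) ^ k * htil R ((v : ℤ) + (n : ℤ) - 1) *
          (htil R ((n : ℤ) - 1))⁻¹ * R n 0 := by
  intro k n v hn hv
  set h : ℕ → ℝ := fun j => R j 1 / R j 0 with hh
  have hne0 : ∀ j, h j ≠ 0 := fun j => div_ne_zero (hne j 1) (hne j 0)
  have hαpos : (0 : ℝ) < α := lt_trans one_pos hα
  -- periodicity of h
  have hper : ∀ m, h (m + T) = h m := by
    intro m
    have hc : (α : ℝ) ^ (2 * (T : ℝ) * H) ≠ 0 := by positivity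
    simp only [hh, hDSI m 1, hDSI m 0]
    rw [mul_div_mul_left _ _ hc]
  -- one-step recursion
  have hstep : ∀ m τ : ℕ, R m (τ + 1) = R m τ * h (m + τ) := by
    intro m τ
    have key : R m (τ + 1) * R (m + τ) 0 = R m τ * R (m + τ) 1 := by
      rw [hfact m (τ + 1), hfact (m + τ) 0, hfact m τ, hfact (m + τ) 1]
      ring_nf
    have h0 := hne (m + τ) 0
    show R m (τ + 1) = R m τ * (R (m + τ) 1 / R (m + τ) 0)
    rw [mul_div_assoc', eq_div_iff h0]
    linarith [key]
  -- P notation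
  set P : ℕ → ℕ → ℝ := fun m s => ∏ j ∈ Finset.range s, h (m + j) with hP
  -- product formula
  have hA : ∀ m τ : ℕ, R m τ = P m τ * R m 0 := by
    intro m τ
    induction τ with
    | zero => simp [hP]
    | succ t ih =>
        rw [hstep m t, ih]
        simp only [hP, Finset.prod_range_succ]
        ring
  have hPne : ∀ m s, P m s ≠ 0 := by
    intro m s
    exact Finset.prod_ne_zero_iff.mpr fun j _ => hne0 _
  have hPadd : ∀ m a b, P m (a + b) = P m a * P (m + a) b := by
    intro m a b
    simp only [hP, Finset.prod_range_add, add_assoc]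
  have hPshift : ∀ m s, P (m + T) s = P m s := by
    intro m s
    refine Finset.prod_congr rfl fun j _ => ?_
    rw [add_right_comm, hper]
  have hPT : ∀ m, P m T = P 0 T := by
    intro m
    induction m with
    | zero => rfl
    | succ p ih =>
        have e1 : P p (T + 1) = P (p + 1) T * h p := by
          simp only [hP, Finset.prod_range_succ']
          simp [add_comm, add_assoc, add_left_comm]
        have e2 : P p (T + 1) = P p T * h p := by
          simp only [hP, Finset.prod_range_succ, hper]
        have := e1.symm.trans e2
        have := mul_right_cancel₀ (hne0 p) this
        rw [this, ih]
  -- main product decomposition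
  have hmain : ∀ m, P m (k * T + v) = (P 0 T) ^ k * P m v := by
    intro m
    induction k with
    | zero => simp
    | succ q ih =>
        have : (q + 1) * T + v = T + (q * T + v) := by ring
        rw [this, hPadd, hPshift, ih, hPT, pow_succ]
        ring
  -- identify htil values
  have hTnat : (((T : ℤ) - 1) + 1).toNat = T := by omega
  have hnnat : (((n : ℤ) - 1) + 1).toNat = n := by omega
  have hvnnat : ((((v : ℤ) + (n : ℤ)) - 1) + 1).toNat = n + v := by omega
  have htilT : htil R ((T : ℤ) - 1) = P 0 T := by
    simp only [htil, hTnat, hP, hh, zero_add]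
  have htiln : htil R ((n : ℤ) - 1) = P 0 n := by
    simp only [htil, hnnat, hP, hh, zero_add]
  have htilvn : htil R ((v : ℤ) + (n : ℤ) - 1) = P 0 n * P n v := by
    have e : htil R ((v : ℤ) + (n : ℤ) - 1) = P 0 (n + v) := by
      simp only [htil, hvnnat, hP, hh, zero_add]
    rw [e, hPadd, zero_add]
  rw [hA n (k * T + v), hmain n, htilT, htiln, htilvn]
  have h0n := hPne 0 n
  field_simp
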